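/- Let φ(z) = (−z² + 2z)/(2z − 1), extended to ℙ¹(ℚ) = ℚ ∪ {∞} by φ(1/2) = ∞ and φ(∞) = ∞. Then the set of rational preperiodic points of φ is exactly {0, 1, ∞, 2, −1, 1/2}, with orbit structure: 0, 1, and ∞ are fixed points, φ(2) = 0, φ(−1) = 1, and φ(1/2) = ∞. In particular φ has exactly three rational fixed points and six rational preperiodic points. -/

import Mathlib

/-!
The rational preperiodic points of `φ(z) = (−z² + 2z)/(2z − 1)` are exactly
`{0, 1, ∞, 2, −1, 1/2}`, with `0`, `1`, `∞` fixed, `φ(2) = 0`, `φ(−1) = 1`,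
`φ(1/2) = ∞`: three rational fixed points and six rational preperiodic
points.

We model ℙ¹(ℚ) as `Option ℚ`, with `none` playing the role of ∞;
`φ(1/2) = ∞` and `φ(∞) = ∞`.
-/

/-- The map `φ(z) = (−z² + 2z)/(2z − 1)` on `ℙ¹(ℚ)`, with `φ(1/2) = ∞` and
`φ(∞) = ∞`. -/
def phi14 : Option ℚ → Option ℚ
  | none => none
  | some x =>
      if 2 * x - 1 = 0 then none
      else some ((-x ^ 2 + 2 * x) / (2 * x - 1))

/-- A point is preperiodic for a self-map `f` if two distinct iterates of `f`
agree on it, i.e. its forward orbit is finite. -/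
def IsPreperiodicPt {X : Type*} (f : X → X) (α : X) : Prop :=
  ∃ i j : ℕ, i < j ∧ f^[i] α = f^[j] α


/-- height of a point of `ℙ¹(ℚ)`. -/
def hO : Option ℚ → ℤ
  | none => 0
  | some x => max |x.num| (x.den : ℤ)


/-- height of a point of P¹(ℚ) -/
-- the positive case of the key inequality
lemma ineq_pos (a b : ℤ) (hb : 1 ≤ b) (hba : b ≤ a) (h6 : 6 ≤ a) :
    3 * a < max |a * (2 * b - a)| |b * (2 * a - b)| := by
  rcases le_or_gt 4 |2 * b - a| with h4 | h4
  · have h1 : |a * (2 * b - a)| = a * |2 * b - a| := by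
      rw [abs_mul, abs_of_nonneg (by linarith : (0:ℤ) ≤ a)]
    have : 3 * a < a * |2 * b - a| := by nlinarith
    exact lt_max_of_lt_left (h1 ▸ this)
  · have habs := abs_lt.mp h4
    have hb2 : 2 ≤ b := by omega
    have hpos : 0 < 2 * a - b := by omega
    have h1 : |b * (2 * a - b)| = b * (2 * a - b) := by
      rw [abs_of_nonneg (by positivity)]
    have : 3 * a < b * (2 * a - b) := by nlinarith [(a - b) * (2 * b - 3), (b - 2) * (b - 3)]
    refine lt_max_of_lt_right ?_
    rw [h1]; exact this

lemma ineq (a b : ℤ) (hb : 1 ≤ b) (hM : 6 ≤ max |a| b) :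
    3 * max |a| b < max |a * (2 * b - a)| |b * (2 * a - b)| := by
  rcases le_or_gt a 0 with ha | ha
  · have hnab : |a| = -a := abs_of_nonpos ha
    rcases le_or_gt b (-a) with hc | hc
    · have hmax : max |a| b = -a := by rw [hnab]; exact max_eq_left hc
      have h6 : 6 ≤ -a := by rwa [hmax] at hM
      have h1 : |a * (2 * b - a)| = (-a) * (2 * b - a) := by
        rw [abs_mul, hnab, abs_of_nonneg (by linarith : (0:ℤ) ≤ 2 * b - a)]
      rw [hmax]
      refine lt_max_of_lt_left ?_
      rw [h1]; nlinarith
    · have hmax : max |a| b = b := by rw [hnab]; exact max_eq_right hc.le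
      have h6 : 6 ≤ b := by rwa [hmax] at hM
      have h1 : |b * (2 * a - b)| = b * (b - 2 * a) := by
        rw [abs_mul, abs_of_nonneg (by linarith : (0:ℤ) ≤ b),
          abs_of_nonpos (by linarith : 2 * a - b ≤ 0)]; ring
      rw [hmax]
      refine lt_max_of_lt_right ?_
      rw [h1]; nlinarith
  · have hnab : |a| = a := abs_of_pos ha
    rcases le_or_gt b a with hba | hba
    · have hmax : max |a| b = a := by rw [hnab]; exact max_eq_left hba
      rw [hmax]
      exact ineq_pos a b hb hba (by rwa [hmax] at hM)
    · have hmax : max |a| b = b := by rw [hnab]; exact max_eq_right hba.le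
      rw [hmax]
      have := ineq_pos b a ha hba.le (by rwa [hmax] at hM)
      rw [max_comm] at this
      exact this
lemma growth (x : ℚ) (h6 : 6 ≤ hO (some x)) :
    ∃ y : ℚ, phi14 (some x) = some y ∧ hO (some x) < hO (some y) := by
  have hb : (0:ℤ) < (x.den : ℤ) := by exact_mod_cast x.pos
  set a : ℤ := x.num with ha
  set b : ℤ := (x.den : ℤ) with hbden
  have hco : Nat.Coprime a.natAbs b.natAbs := by simpa [ha, hbden] using x.reduced
  have h6' : 6 ≤ max |a| b := h6
  have hbQ : (b : ℚ) ≠ 0 := by exact_mod_cast hb.ne'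
  have hxab : x = (a : ℚ) / (b : ℚ) := by
    rw [ha, hbden]; push_cast; exact (Rat.num_div_den x).symm
  have hane : a ≠ 0 := by
    intro h0
    have hx0 : x = 0 := Rat.num_eq_zero.mp h0
    rw [hx0] at hbden
    rw [h0] at h6'
    simp at hbden
    rw [hbden] at h6'
    norm_num at h6'
  have h2ba : 2 * b - a ≠ 0 := by
    intro h0
    have hd : b ∣ a := ⟨2, by omega⟩
    have hdvd : b.natAbs ∣ Nat.gcd a.natAbs b.natAbs :=
      Nat.dvd_gcd (Int.natAbs_dvd_natAbs.mpr hd) dvd_rfl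
    rw [hco] at hdvd
    have hdvd1 := Nat.dvd_one.mp hdvd
    have hb1 : b = 1 := by omega
    have ha2 : a = 2 := by omega
    rw [ha2, hb1] at h6'
    norm_num at h6'
  have h2ab : 2 * a - b ≠ 0 := by
    intro h0
    have hd : b ∣ 2 * a := ⟨1, by omega⟩
    have hdd : b.natAbs ∣ 2 * a.natAbs := by
      have h2n : (2 * a).natAbs = 2 * a.natAbs := by
        rw [Int.natAbs_mul]; rfl
      rw [← h2n]; exact Int.natAbs_dvd_natAbs.mpr hd
    have hb2 : b.natAbs ∣ 2 := Nat.Coprime.dvd_of_dvd_mul_right hco.symm hdd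
    have hle : b.natAbs ≤ 2 := Nat.le_of_dvd two_pos hb2
    have : b = 1 ∨ b = 2 := by omega
    rcases this with h1 | h1
    · omega
    · have ha1 : a = 1 := by omega
      rw [ha1, h1] at h6'
      norm_num at h6'
  -- the image point
  have h2x : 2 * x - 1 ≠ 0 := by
    rw [hxab]
    intro h0
    apply h2ab
    have : (2 * a - b : ℚ) = 0 := by
      have := mul_eq_zero_of_left h0 (b:ℚ)
      field_simp at this ⊢
      linarith [this]
    exact_mod_cast this
  set y : ℚ := (-x ^ 2 + 2 * x) / (2 * x - 1) with hy
  refine ⟨y, by simp [phi14, if_neg h2x, hy], ?_⟩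
  set u : ℤ := a * (2 * b - a) with hu
  set v : ℤ := b * (2 * a - b) with hv
  have hvne : v ≠ 0 := mul_ne_zero hb.ne' (by omega)
  have hune : u ≠ 0 := mul_ne_zero hane (by omega)
  have hyuv : y = (u : ℚ) / (v : ℚ) := by
    rw [hy, hxab, hu, hv]
    have h2abQ : (2 * (a:ℚ) - b) ≠ 0 := by
      intro h0; apply h2ab; exact_mod_cast (by push_cast; linarith : ((2*a-b:ℤ):ℚ) = 0)
    push_cast
    field_simp
    ring
  have hydi : y = Rat.divInt u v := by rw [Rat.divInt_eq_div]; exact hyuv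
  have hnd : y.num ∣ u := by rw [hydi]; exact Rat.num_dvd u hvne
  have hdd : (y.den : ℤ) ∣ v := by rw [hydi]; exact Rat.den_dvd u v
  obtain ⟨s, hs⟩ := hnd
  obtain ⟨t, ht⟩ := hdd
  have hynum : y.num ≠ 0 := by
    intro h0; apply hune; rw [hs, h0, zero_mul]
  have hyden : ((y.den : ℤ)) ≠ 0 := by positivity
  have cross : u * (y.den : ℤ) = y.num * v := by
    have h1 : Rat.divInt u v = Rat.divInt y.num (y.den : ℤ) := by
      rw [← hydi, Rat.num_divInt_den]
    exact (Rat.divInt_eq_divInt_iff hvne hyden).mp h1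
  have hst : s = t := by
    rw [hs, ht] at cross
    have : y.num * (s * (y.den:ℤ)) = y.num * ((y.den:ℤ) * t) := by ring_nf; ring_nf at cross; linarith
    have h2 := mul_left_cancel₀ hynum this
    have : (y.den:ℤ) * s = (y.den:ℤ) * t := by linarith [h2]
    exact mul_left_cancel₀ hyden this
  have hsu : s ∣ u := Dvd.intro_left _ hs.symm
  have hsv : s ∣ v := by rw [← hst] at ht; exact Dvd.intro_left _ ht.symm
  -- s divides 3
  have hs3 : s ∣ 3 := by
    have d1 : s ∣ 3 * a ^ 3 := by
      have he : (2 * b - 3 * a) * u + 4 * a * v = 3 * a ^ 3 := by rw [hu, hv]; ring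
      rw [← he]
      exact dvd_add (hsu.mul_left _) (hsv.mul_left _)
    have d2 : s ∣ 3 * b ^ 3 := by
      have he : 4 * b * u + (2 * a - 3 * b) * v = 3 * b ^ 3 := by rw [hu, hv]; ring
      rw [← he]
      exact dvd_add (hsu.mul_left _) (hsv.mul_left _)
    have dg : s ∣ (Int.gcd (3 * a ^ 3) (3 * b ^ 3) : ℤ) := Int.dvd_coe_gcd d1 d2
    have hg : Int.gcd (3 * a ^ 3) (3 * b ^ 3) = 3 := by
      rw [Int.gcd_mul_left]
      have : Int.gcd (a ^ 3) (b ^ 3) = 1 := by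
        have : Nat.Coprime (a.natAbs ^ 3) (b.natAbs ^ 3) := hco.pow 3 3
        rw [Int.gcd, Int.natAbs_pow, Int.natAbs_pow]
        exact this
      rw [this]
      rfl
    rw [hg] at dg
    exact_mod_cast dg
  have hsb : |s| ≤ 3 := Int.le_of_dvd (by norm_num) ((abs_dvd _ _).mpr hs3)
  have hsne : s ≠ 0 := by rintro rfl; rw [mul_zero] at hs; exact hune hs
  have hub : |u| ≤ 3 * |y.num| := by
    rw [hs, abs_mul]
    have h1 : 1 ≤ |y.num| := by
      rcases (abs_pos.mpr hynum) with h; omega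
    nlinarith [abs_nonneg y.num, abs_nonneg s]
  have hvb : |v| ≤ 3 * (y.den : ℤ) := by
    rw [ht, ← hst, abs_mul, abs_of_nonneg (by positivity : (0:ℤ) ≤ (y.den:ℤ))]
    have h1 : 1 ≤ (y.den : ℤ) := by exact_mod_cast y.pos
    nlinarith
  have key := ineq a b hb h6'
  rw [← hu, ← hv] at key
  have hfin : 3 * max |a| b < 3 * max |y.num| (y.den : ℤ) := by
    calc 3 * max |a| b < max |u| |v| := key
    _ ≤ 3 * max |y.num| (y.den : ℤ) := by
        apply max_le
        · exact le_trans hub (by gcongr; exact le_max_left _ _)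
        · exact le_trans hvb (by gcongr; exact le_max_right _ _)
  show max |a| b < max |y.num| (y.den : ℤ)
  linarith
lemma step' (α : Option ℚ) (h6 : 6 ≤ hO α) : hO α < hO (phi14 α) := by
  match α with
  | none => simp [hO] at h6
  | some x =>
      obtain ⟨y, hy, hlt⟩ := growth x h6
      rw [hy]; exact hlt

lemma pre_step {X : Type*} (f : X → X) (α : X) (h : IsPreperiodicPt f α) :
    IsPreperiodicPt f (f α) := by
  obtain ⟨i, j, hij, h⟩ := h
  refine ⟨i, j, hij, ?_⟩
  simp only [← Function.iterate_succ_apply, Function.iterate_succ_apply', h]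

lemma not_pre_of_big (α : Option ℚ) (h6 : 6 ≤ hO α) :
    ¬ IsPreperiodicPt phi14 α := by
  have key : ∀ n, 6 ≤ hO (phi14^[n] α) := by
    intro n; induction n with
    | zero => simpa
    | succ n ih =>
        rw [Function.iterate_succ_apply']
        linarith [step' _ ih]
  have mono : StrictMono fun n => hO (phi14^[n] α) :=
    strictMono_nat_of_lt_succ fun n => by
      simp only [Function.iterate_succ_apply']
      exact step' _ (key n)
  rintro ⟨i, j, hij, hh⟩
  exact absurd (congrArg hO hh) (mono hij).ne

lemma pre_bound (α : Option ℚ) (h : IsPreperiodicPt phi14 α) : hO α ≤ 5 := by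
  by_contra hc
  push_neg at hc
  exact not_pre_of_big α (by linarith) h

lemma not_pre_big (y : ℚ) (a b : ℤ) (hb : 0 < b) (hco : Nat.Coprime a.natAbs b.natAbs)
    (hy : y = (a : ℚ) / (b : ℚ)) (h6 : 6 ≤ max |a| b) :
    ¬ IsPreperiodicPt phi14 (some y) := by
  apply not_pre_of_big
  show 6 ≤ max |y.num| (y.den : ℤ)
  rw [hy, Rat.num_div_eq_of_coprime hb hco, Rat.den_div_eq_of_coprime hb hco]
  exact h6

lemma not_pre_next (x : ℚ) (β : Option ℚ) (h : phi14 (some x) = β)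
    (hβ : ¬ IsPreperiodicPt phi14 β) : ¬ IsPreperiodicPt phi14 (some x) := by
  intro hpre
  exact hβ (h ▸ pre_step phi14 _ hpre)
lemma not_pre_of_eq (x w : ℚ) (h : x = w) (hw : ¬ IsPreperiodicPt phi14 (some w)) :
    ¬ IsPreperiodicPt phi14 (some x) := h ▸ hw

lemma low_cases (x : ℚ) (hpre : IsPreperiodicPt phi14 (some x))
    (h1 : |x.num| ≤ 5) (h2 : (x.den : ℤ) ≤ 5) :
    x = 0 ∨ x = 1 ∨ x = 2 ∨ x = -1 ∨ x = 1/2 := by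
  have hd1 : 1 ≤ (x.den : ℤ) := by exact_mod_cast x.pos
  have habs := abs_le.mp h1
  obtain ⟨n, d, hx, hnc, hdc⟩ :
      ∃ (n : ℤ) (d : ℕ), (n : ℚ) / (d : ℚ) = x ∧
        (n = -5 ∨ n = -4 ∨ n = -3 ∨ n = -2 ∨ n = -1 ∨ n = 0 ∨ n = 1 ∨ n = 2 ∨ n = 3 ∨ n = 4 ∨ n = 5) ∧
        (d = 1 ∨ d = 2 ∨ d = 3 ∨ d = 4 ∨ d = 5) :=
    ⟨x.num, x.den, Rat.num_div_den x, by omega, by omega⟩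
  rcases hnc with rfl|rfl|rfl|rfl|rfl|rfl|rfl|rfl|rfl|rfl|rfl <;> rcases hdc with rfl|rfl|rfl|rfl|rfl
  · exact absurd hpre (not_pre_of_eq x (-5 : ℚ) (by rw [← hx]; norm_num) (not_pre_next _ (some (35/11 : ℚ)) (by norm_num [phi14]) (not_pre_big _ 35 11 (by norm_num) (by norm_num) (by norm_num) (by norm_num))))
  · exact absurd hpre (not_pre_of_eq x (-5/2 : ℚ) (by rw [← hx]; norm_num) (not_pre_next _ (some (15/8 : ℚ)) (by norm_num [phi14]) (not_pre_big _ 15 8 (by norm_num) (by norm_num) (by norm_num) (by norm_num))))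
  · exact absurd hpre (not_pre_of_eq x (-5/3 : ℚ) (by rw [← hx]; norm_num) (not_pre_next _ (some (55/39 : ℚ)) (by norm_num [phi14]) (not_pre_big _ 55 39 (by norm_num) (by norm_num) (by norm_num) (by norm_num))))
  · exact absurd hpre (not_pre_of_eq x (-5/4 : ℚ) (by rw [← hx]; norm_num) (not_pre_next _ (some (65/56 : ℚ)) (by norm_num [phi14]) (not_pre_big _ 65 56 (by norm_num) (by norm_num) (by norm_num) (by norm_num))))
  · rw [← hx]; norm_num
  · exact absurd hpre (not_pre_of_eq x (-4 : ℚ) (by rw [← hx]; norm_num) (not_pre_next _ (some (8/3 : ℚ)) (by norm_num [phi14]) (not_pre_big _ 8 3 (by norm_num) (by norm_num) (by norm_num) (by norm_num))))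
  · exact absurd hpre (not_pre_of_eq x (-2 : ℚ) (by rw [← hx]; norm_num) (not_pre_next _ (some (8/5 : ℚ)) (by norm_num [phi14]) (not_pre_big _ 8 5 (by norm_num) (by norm_num) (by norm_num) (by norm_num))))
  · exact absurd hpre (not_pre_of_eq x (-4/3 : ℚ) (by rw [← hx]; norm_num) (not_pre_next _ (some (40/33 : ℚ)) (by norm_num [phi14]) (not_pre_big _ 40 33 (by norm_num) (by norm_num) (by norm_num) (by norm_num))))
  · rw [← hx]; norm_num
  · exact absurd hpre (not_pre_of_eq x (-4/5 : ℚ) (by rw [← hx]; norm_num) (not_pre_next _ (some (56/65 : ℚ)) (by norm_num [phi14]) (not_pre_big _ 56 65 (by norm_num) (by norm_num) (by norm_num) (by norm_num))))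
  · exact absurd hpre (not_pre_of_eq x (-3 : ℚ) (by rw [← hx]; norm_num) (not_pre_next _ (some (15/7 : ℚ)) (by norm_num [phi14]) (not_pre_big _ 15 7 (by norm_num) (by norm_num) (by norm_num) (by norm_num))))
  · exact absurd hpre (not_pre_of_eq x (-3/2 : ℚ) (by rw [← hx]; norm_num) (not_pre_next _ (some (21/16 : ℚ)) (by norm_num [phi14]) (not_pre_big _ 21 16 (by norm_num) (by norm_num) (by norm_num) (by norm_num))))
  · rw [← hx]; norm_num
  · exact absurd hpre (not_pre_of_eq x (-3/4 : ℚ) (by rw [← hx]; norm_num) (not_pre_next _ (some (33/40 : ℚ)) (by norm_num [phi14]) (not_pre_big _ 33 40 (by norm_num) (by norm_num) (by norm_num) (by norm_num))))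
  · exact absurd hpre (not_pre_of_eq x (-3/5 : ℚ) (by rw [← hx]; norm_num) (not_pre_next _ (some (39/55 : ℚ)) (by norm_num [phi14]) (not_pre_big _ 39 55 (by norm_num) (by norm_num) (by norm_num) (by norm_num))))
  · exact absurd hpre (not_pre_of_eq x (-2 : ℚ) (by rw [← hx]; norm_num) (not_pre_next _ (some (8/5 : ℚ)) (by norm_num [phi14]) (not_pre_big _ 8 5 (by norm_num) (by norm_num) (by norm_num) (by norm_num))))
  · rw [← hx]; norm_num
  · exact absurd hpre (not_pre_of_eq x (-2/3 : ℚ) (by rw [← hx]; norm_num) (not_pre_next _ (some (16/21 : ℚ)) (by norm_num [phi14]) (not_pre_big _ 16 21 (by norm_num) (by norm_num) (by norm_num) (by norm_num))))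
  · exact absurd hpre (not_pre_of_eq x (-1/2 : ℚ) (by rw [← hx]; norm_num) (not_pre_next _ (some (5/8 : ℚ)) (by norm_num [phi14]) (not_pre_big _ 5 8 (by norm_num) (by norm_num) (by norm_num) (by norm_num))))
  · exact absurd hpre (not_pre_of_eq x (-2/5 : ℚ) (by rw [← hx]; norm_num) (not_pre_next _ (some (8/15 : ℚ)) (by norm_num [phi14]) (not_pre_big _ 8 15 (by norm_num) (by norm_num) (by norm_num) (by norm_num))))
  · rw [← hx]; norm_num
  · exact absurd hpre (not_pre_of_eq x (-1/2 : ℚ) (by rw [← hx]; norm_num) (not_pre_next _ (some (5/8 : ℚ)) (by norm_num [phi14]) (not_pre_big _ 5 8 (by norm_num) (by norm_num) (by norm_num) (by norm_num))))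
  · exact absurd hpre (not_pre_of_eq x (-1/3 : ℚ) (by rw [← hx]; norm_num) (not_pre_next _ (some (7/15 : ℚ)) (by norm_num [phi14]) (not_pre_big _ 7 15 (by norm_num) (by norm_num) (by norm_num) (by norm_num))))
  · exact absurd hpre (not_pre_of_eq x (-1/4 : ℚ) (by rw [← hx]; norm_num) (not_pre_next _ (some (3/8 : ℚ)) (by norm_num [phi14]) (not_pre_big _ 3 8 (by norm_num) (by norm_num) (by norm_num) (by norm_num))))
  · exact absurd hpre (not_pre_of_eq x (-1/5 : ℚ) (by rw [← hx]; norm_num) (not_pre_next _ (some (11/35 : ℚ)) (by norm_num [phi14]) (not_pre_big _ 11 35 (by norm_num) (by norm_num) (by norm_num) (by norm_num))))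
  · rw [← hx]; norm_num
  · rw [← hx]; norm_num
  · rw [← hx]; norm_num
  · rw [← hx]; norm_num
  · rw [← hx]; norm_num
  · rw [← hx]; norm_num
  · rw [← hx]; norm_num
  · exact absurd hpre (not_pre_of_eq x (1/3 : ℚ) (by rw [← hx]; norm_num) (not_pre_next _ (some (-5/3 : ℚ)) (by norm_num [phi14]) (not_pre_next _ (some (55/39 : ℚ)) (by norm_num [phi14]) (not_pre_big _ 55 39 (by norm_num) (by norm_num) (by norm_num) (by norm_num)))))
  · exact absurd hpre (not_pre_of_eq x (1/4 : ℚ) (by rw [← hx]; norm_num) (not_pre_next _ (some (-7/8 : ℚ)) (by norm_num [phi14]) (not_pre_big _ (-7) 8 (by norm_num) (by norm_num) (by norm_num) (by norm_num))))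
  · exact absurd hpre (not_pre_of_eq x (1/5 : ℚ) (by rw [← hx]; norm_num) (not_pre_next _ (some (-3/5 : ℚ)) (by norm_num [phi14]) (not_pre_next _ (some (39/55 : ℚ)) (by norm_num [phi14]) (not_pre_big _ 39 55 (by norm_num) (by norm_num) (by norm_num) (by norm_num)))))
  · rw [← hx]; norm_num
  · rw [← hx]; norm_num
  · exact absurd hpre (not_pre_of_eq x (2/3 : ℚ) (by rw [← hx]; norm_num) (not_pre_next _ (some (8/3 : ℚ)) (by norm_num [phi14]) (not_pre_big _ 8 3 (by norm_num) (by norm_num) (by norm_num) (by norm_num))))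
  · rw [← hx]; norm_num
  · exact absurd hpre (not_pre_of_eq x (2/5 : ℚ) (by rw [← hx]; norm_num) (not_pre_next _ (some (-16/5 : ℚ)) (by norm_num [phi14]) (not_pre_big _ (-16) 5 (by norm_num) (by norm_num) (by norm_num) (by norm_num))))
  · exact absurd hpre (not_pre_of_eq x (3 : ℚ) (by rw [← hx]; norm_num) (not_pre_next _ (some (-3/5 : ℚ)) (by norm_num [phi14]) (not_pre_next _ (some (39/55 : ℚ)) (by norm_num [phi14]) (not_pre_big _ 39 55 (by norm_num) (by norm_num) (by norm_num) (by norm_num)))))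
  · exact absurd hpre (not_pre_of_eq x (3/2 : ℚ) (by rw [← hx]; norm_num) (not_pre_next _ (some (3/8 : ℚ)) (by norm_num [phi14]) (not_pre_big _ 3 8 (by norm_num) (by norm_num) (by norm_num) (by norm_num))))
  · rw [← hx]; norm_num
  · exact absurd hpre (not_pre_of_eq x (3/4 : ℚ) (by rw [← hx]; norm_num) (not_pre_next _ (some (15/8 : ℚ)) (by norm_num [phi14]) (not_pre_big _ 15 8 (by norm_num) (by norm_num) (by norm_num) (by norm_num))))
  · exact absurd hpre (not_pre_of_eq x (3/5 : ℚ) (by rw [← hx]; norm_num) (not_pre_next _ (some (21/5 : ℚ)) (by norm_num [phi14]) (not_pre_big _ 21 5 (by norm_num) (by norm_num) (by norm_num) (by norm_num))))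
  · exact absurd hpre (not_pre_of_eq x (4 : ℚ) (by rw [← hx]; norm_num) (not_pre_next _ (some (-8/7 : ℚ)) (by norm_num [phi14]) (not_pre_big _ (-8) 7 (by norm_num) (by norm_num) (by norm_num) (by norm_num))))
  · rw [← hx]; norm_num
  · exact absurd hpre (not_pre_of_eq x (4/3 : ℚ) (by rw [← hx]; norm_num) (not_pre_next _ (some (8/15 : ℚ)) (by norm_num [phi14]) (not_pre_big _ 8 15 (by norm_num) (by norm_num) (by norm_num) (by norm_num))))
  · rw [← hx]; norm_num
  · exact absurd hpre (not_pre_of_eq x (4/5 : ℚ) (by rw [← hx]; norm_num) (not_pre_next _ (some (8/5 : ℚ)) (by norm_num [phi14]) (not_pre_big _ 8 5 (by norm_num) (by norm_num) (by norm_num) (by norm_num))))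
  · exact absurd hpre (not_pre_of_eq x (5 : ℚ) (by rw [← hx]; norm_num) (not_pre_next _ (some (-5/3 : ℚ)) (by norm_num [phi14]) (not_pre_next _ (some (55/39 : ℚ)) (by norm_num [phi14]) (not_pre_big _ 55 39 (by norm_num) (by norm_num) (by norm_num) (by norm_num)))))
  · exact absurd hpre (not_pre_of_eq x (5/2 : ℚ) (by rw [← hx]; norm_num) (not_pre_next _ (some (-5/16 : ℚ)) (by norm_num [phi14]) (not_pre_big _ (-5) 16 (by norm_num) (by norm_num) (by norm_num) (by norm_num))))
  · exact absurd hpre (not_pre_of_eq x (5/3 : ℚ) (by rw [← hx]; norm_num) (not_pre_next _ (some (5/21 : ℚ)) (by norm_num [phi14]) (not_pre_big _ 5 21 (by norm_num) (by norm_num) (by norm_num) (by norm_num))))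
  · exact absurd hpre (not_pre_of_eq x (5/4 : ℚ) (by rw [← hx]; norm_num) (not_pre_next _ (some (5/8 : ℚ)) (by norm_num [phi14]) (not_pre_big _ 5 8 (by norm_num) (by norm_num) (by norm_num) (by norm_num))))
  · rw [← hx]; norm_num

/-- The set of rational preperiodic points of `φ(z) = (−z² + 2z)/(2z − 1)`
is exactly `{0, 1, ∞, 2, −1, 1/2}` (six points); the fixed points are
exactly `0`, `1`, `∞`; and `φ(2) = 0`, `φ(−1) = 1`, `φ(1/2) = ∞`. -/
theorem phi14_preperiodic_points :
    {α : Option ℚ | IsPreperiodicPt phi14 α} =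
        ({some 0, some 1, none, some 2, some (-1), some (1 / 2)} :
          Set (Option ℚ)) ∧
      {α : Option ℚ | IsPreperiodicPt phi14 α}.ncard = 6 ∧
      (∀ α : Option ℚ, phi14 α = α ↔
        α ∈ ({some 0, some 1, none} : Set (Option ℚ))) ∧
      phi14 (some 2) = some 0 ∧ phi14 (some (-1)) = some 1 ∧
      phi14 (some (1 / 2)) = none := by
  have e0 : phi14 (some 0) = some 0 := by norm_num [phi14]
  have e1 : phi14 (some 1) = some 1 := by norm_num [phi14]
  have e2 : phi14 (some 2) = some 0 := by norm_num [phi14]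
  have em1 : phi14 (some (-1 : ℚ)) = some 1 := by norm_num [phi14]
  have eh : phi14 (some (1/2 : ℚ)) = none := by norm_num [phi14]
  have en : phi14 none = none := rfl
  have pre_of_fix : ∀ α : Option ℚ, phi14 α = α → IsPreperiodicPt phi14 α := by
    intro α h
    exact ⟨0, 1, by omega, by simp [Function.iterate_one, h]⟩
  have pre_back : ∀ α : Option ℚ, IsPreperiodicPt phi14 (phi14 α) →
      IsPreperiodicPt phi14 α := by
    rintro α ⟨i, j, hij, h⟩
    exact ⟨i + 1, j + 1, by omega, by simpa [Function.iterate_succ_apply] using h⟩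
  have hset : {α : Option ℚ | IsPreperiodicPt phi14 α} =
      ({some 0, some 1, none, some 2, some (-1), some (1 / 2)} : Set (Option ℚ)) := by
    ext α
    simp only [Set.mem_setOf_eq, Set.mem_insert_iff, Set.mem_singleton_iff]
    constructor
    · intro h
      match α with
      | none => tauto
      | some x =>
          have hb : max |x.num| (x.den : ℤ) ≤ 5 := pre_bound (some x) h
          have hb1 : |x.num| ≤ 5 := le_trans (le_max_left _ _) hb
          have hb2 : (x.den : ℤ) ≤ 5 := le_trans (le_max_right _ _) hb
          rcases low_cases x h hb1 hb2 with rfl | rfl | rfl | rfl | rfl <;> tauto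
    · rintro (rfl | rfl | rfl | rfl | rfl | rfl)
      · exact pre_of_fix _ e0
      · exact pre_of_fix _ e1
      · exact pre_of_fix _ en
      · exact pre_back _ (e2 ▸ pre_of_fix _ e0)
      · exact pre_back _ (em1 ▸ pre_of_fix _ e1)
      · exact pre_back _ (eh ▸ pre_of_fix _ en)
  refine ⟨hset, ?_, ?_, e2, em1, eh⟩
  · rw [hset]
    rw [Set.ncard_insert_of_notMem (by simp only [Set.mem_insert_iff, Set.mem_singleton_iff, Option.some.injEq, reduceCtorEq]; norm_num) (Set.toFinite _),
      Set.ncard_insert_of_notMem (by simp only [Set.mem_insert_iff, Set.mem_singleton_iff, Option.some.injEq, reduceCtorEq]; norm_num) (Set.toFinite _),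
      Set.ncard_insert_of_notMem (by simp only [Set.mem_insert_iff, Set.mem_singleton_iff, Option.some.injEq, reduceCtorEq]; norm_num) (Set.toFinite _),
      Set.ncard_insert_of_notMem (by simp only [Set.mem_insert_iff, Set.mem_singleton_iff, Option.some.injEq, reduceCtorEq]; norm_num) (Set.toFinite _),
      Set.ncard_insert_of_notMem (by simp only [Set.mem_insert_iff, Set.mem_singleton_iff, Option.some.injEq, reduceCtorEq]; norm_num) (Set.toFinite _),
      Set.ncard_singleton]
  · intro α
    simp only [Set.mem_insert_iff, Set.mem_singleton_iff]
    constructor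
    · intro h
      match α with
      | none => tauto
      | some x =>
          by_cases hc : 2 * x - 1 = 0
          · exfalso
            rw [show phi14 (some x) = none by simp [phi14, if_pos hc]] at h
            cases h
          · rw [show phi14 (some x) = some ((-x ^ 2 + 2 * x) / (2 * x - 1)) by
              simp [phi14, if_neg hc]] at h
            have hx : (-x ^ 2 + 2 * x) / (2 * x - 1) = x := Option.some_injective _ h
            rw [div_eq_iff hc] at hx
            have h01 : x * (x - 1) = 0 := by linear_combination (-1/3) * hx
            rcases mul_eq_zero.mp h01 with h | h
            · left; rw [h]
            · right; left; rw [sub_eq_zero.mp h]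
    · rintro (rfl | rfl | rfl)
      · exact e0
      · exact e1
      · exact en
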